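/- A coalgebra endomorphism Φ of the reduced tensor coalgebra T(V) whose arity-1 term is an isomorphism (e.g. the identity of V) is itself an isomorphism of coalgebras. -/

import Mathlib

open scoped TensorProduct DirectSum
open PiTensorProduct

variable (R : Type) [CommRing R] (V : Type) [AddCommGroup V] [Module R V]

/-- The `n`-th tensor power of `V`. -/
abbrev TP (n : ℕ) : Type := ⨂[R] _ : Fin n, V

/-- The reduced tensor coalgebra `T(V) = ⊕_{n ≥ 1} V^{⊗ n}` (the summand indexed by
`m : ℕ` is `V^{⊗(m+1)}`). -/
abbrev TCoalg : Type := ⨁ m : ℕ, TP R V (m + 1)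

/-- Cast between tensor powers along an equality of exponents. -/
noncomputable def pcast {a b : ℕ} (h : a = b) : TP R V a ≃ₗ[R] TP R V b :=
  PiTensorProduct.reindex R (fun _ => V) (finCongr h)

/-- Splitting a tensor power into a tensor product of two tensor powers. -/
noncomputable def splitTP (a b : ℕ) : TP R V (a + b) ≃ₗ[R] TP R V a ⊗[R] TP R V b :=
  (PiTensorProduct.reindex R (fun _ => V) finSumFinEquiv.symm).trans
    (PiTensorProduct.tmulEquiv R V).symm

/-- The deconcatenation comultiplication on the reduced tensor coalgebra,
`Δ(v₁⋯vₙ) = Σ_{i=1}^{n-1} (v₁⋯vᵢ) ⊗ (v_{i+1}⋯vₙ)`. -/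
noncomputable def Delta : TCoalg R V →ₗ[R] TCoalg R V ⊗[R] TCoalg R V :=
  DirectSum.toModule R ℕ _ fun n =>
    ∑ i : Fin n,
      (TensorProduct.map
          (DirectSum.lof R ℕ (fun m => TP R V (m + 1)) i)
          ((DirectSum.lof R ℕ (fun m => TP R V (m + 1)) (n - 1 - ↑i)).comp
            (pcast R V (by have := i.isLt; omega)).toLinearMap)).comp
        ((splitTP R V (↑i + 1) (n - ↑i)).toLinearMap.comp
          (pcast R V (by have := i.isLt; omega)).toLinearMap)

/-- The projection of the reduced tensor coalgebra onto its cogenerators `V`. -/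
noncomputable def projV : TCoalg R V →ₗ[R] V :=
  (PiTensorProduct.subsingletonEquiv (0 : Fin 1)).toLinearMap.comp
    (DirectSum.component R ℕ (fun m => TP R V (m + 1)) 0)

/-- The inclusion of the cogenerators `V` into the reduced tensor coalgebra. -/
noncomputable def inclV : V →ₗ[R] TCoalg R V :=
  (DirectSum.lof R ℕ (fun m => TP R V (m + 1)) 0).comp
    (PiTensorProduct.subsingletonEquiv (s := fun _ : Fin 1 => V) (0 : Fin 1)).symm.toLinearMap

/-- A linear endomorphism of the reduced tensor coalgebra is a coalgebra morphism if it
commutes with the deconcatenation comultiplication. -/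
noncomputable def IsCoalgMor (F : TCoalg R V →ₗ[R] TCoalg R V) : Prop :=
  (Delta R V).comp F = (TensorProduct.map F F).comp (Delta R V)

noncomputable def pr (m : ℕ) : TCoalg R V →ₗ[R] TP R V (m+1) :=
  DirectSum.component R ℕ (fun m => TP R V (m + 1)) m
noncomputable def io (m : ℕ) : TP R V (m+1) →ₗ[R] TCoalg R V :=
  DirectSum.lof R ℕ (fun m => TP R V (m + 1)) m

lemma pr_io_self (m : ℕ) : (pr R V m).comp (io R V m) = LinearMap.id := by
  ext x; simp [pr, io]

lemma pr_io_ne {m n : ℕ} (h : n ≠ m) : (pr R V m).comp (io R V n) = 0 := by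
  ext x; simp [pr, io, DirectSum.component.of, h]

lemma Delta_comp_io (n : ℕ) :
    (Delta R V).comp (io R V n) = ∑ i : Fin n,
      (TensorProduct.map (io R V i)
          ((io R V (n - 1 - ↑i)).comp (pcast R V (by have := i.isLt; omega)).toLinearMap)).comp
        ((splitTP R V (↑i + 1) (n - ↑i)).toLinearMap.comp
          (pcast R V (by have := i.isLt; omega)).toLinearMap) := by
  refine LinearMap.ext fun x => ?_
  simp [Delta, io, DirectSum.toModule_lof]

-- general: composing two linear maps after Delta_comp_io terms
lemma prpr_term (a b : ℕ) (f : TCoalg R V →ₗ[R] TCoalg R V) (n : ℕ) :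
    (TensorProduct.map ((pr R V a).comp f) ((pr R V b).comp f)).comp ((Delta R V).comp (io R V n))
    = ∑ i : Fin n,
      (TensorProduct.map ((pr R V a).comp (f.comp (io R V i)))
          (((pr R V b).comp (f.comp (io R V (n - 1 - ↑i)))).comp
            (pcast R V (by have := i.isLt; omega)).toLinearMap)).comp
        ((splitTP R V (↑i + 1) (n - ↑i)).toLinearMap.comp
          (pcast R V (by have := i.isLt; omega)).toLinearMap) := by
  rw [Delta_comp_io]
  refine LinearMap.ext fun x => ?_
  simp only [LinearMap.comp_apply, LinearMap.sum_apply, map_sum]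
  refine Finset.sum_congr rfl fun i _ => ?_
  rw [← LinearMap.comp_apply (TensorProduct.map _ _), ← TensorProduct.map_comp]
  rfl

lemma prpr_Delta_io_ne (a b n : ℕ) (h : n ≠ a + b + 1) :
    (TensorProduct.map (pr R V a) (pr R V b)).comp ((Delta R V).comp (io R V n)) = 0 := by
  have := prpr_term R V a b LinearMap.id n
  simp only [LinearMap.comp_id, LinearMap.id_comp] at this
  rw [this]
  refine Finset.sum_eq_zero fun i _ => ?_
  by_cases hia : (i : ℕ) = a
  · have hb : n - 1 - (i : ℕ) ≠ b := by have := i.isLt; omega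
    rw [pr_io_ne R V hb, LinearMap.zero_comp, TensorProduct.map_zero_right, LinearMap.zero_comp]
  · rw [pr_io_ne R V hia, TensorProduct.map_zero_left, LinearMap.zero_comp]

lemma bij_tmap {M N P Q : Type} [AddCommGroup M] [Module R M] [AddCommGroup N] [Module R N]
    [AddCommGroup P] [Module R P] [AddCommGroup Q] [Module R Q]
    {f : M →ₗ[R] P} {g : N →ₗ[R] Q} (hf : Function.Bijective f) (hg : Function.Bijective g) :
    Function.Bijective (TensorProduct.map f g) := by
  have : TensorProduct.map f g =
      (TensorProduct.congr (LinearEquiv.ofBijective f hf) (LinearEquiv.ofBijective g hg)).toLinearMap := by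
    ext m n
    simp [TensorProduct.congr]
  rw [this]
  exact (TensorProduct.congr (LinearEquiv.ofBijective f hf) (LinearEquiv.ofBijective g hg)).bijective

lemma pr_io_bij {j k : ℕ} (h : j = k) : Function.Bijective ((pr R V k).comp (io R V j)) := by
  subst h
  rw [pr_io_self]
  exact Function.bijective_id

lemma prpr_Delta_io_eq (a b : ℕ) :
    ∃ E : TP R V (a + b + 1 + 1) ≃ₗ[R] TP R V (a + 1) ⊗[R] TP R V (b + 1),
    (TensorProduct.map (pr R V a) (pr R V b)).comp ((Delta R V).comp (io R V (a + b + 1)))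
      = E.toLinearMap := by
  have := prpr_term R V a b LinearMap.id (a + b + 1)
  simp only [LinearMap.comp_id, LinearMap.id_comp] at this
  rw [this, Fintype.sum_eq_single (⟨a, by omega⟩ : Fin (a + b + 1))]
  · refine ⟨LinearEquiv.ofBijective _ ?_, LinearMap.ext fun x => (LinearEquiv.ofBijective_apply _ x).symm⟩
    rw [LinearMap.coe_comp]
    refine Function.Bijective.comp ?_ ?_
    · exact bij_tmap R (pr_io_bij R V rfl)
        ((pr_io_bij R V (by simp only [Fin.val_mk]; omega)).comp (pcast R V (by simp only [Fin.val_mk]; omega)).bijective)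
    · rw [LinearMap.coe_comp]
      exact (splitTP R V _ _).bijective.comp (pcast R V _).bijective
  · intro i hi
    have hia : (i : ℕ) ≠ a := fun h => hi (Fin.ext h)
    rw [pr_io_ne R V hia, TensorProduct.map_zero_left, LinearMap.zero_comp]

lemma exists_E' (a b c : ℕ) (h : a + b + 1 = c) :
    ∃ E : TP R V (c + 1) ≃ₗ[R] TP R V (a + 1) ⊗[R] TP R V (b + 1),
    (TensorProduct.map (pr R V a) (pr R V b)).comp (Delta R V)
      = E.toLinearMap.comp (pr R V c) := by
  subst h
  obtain ⟨E, hE⟩ := prpr_Delta_io_eq R V a b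
  refine ⟨E, ?_⟩
  refine DirectSum.linearMap_ext R fun n => ?_
  by_cases h : n = a + b + 1
  · subst h
    rw [LinearMap.comp_assoc]
    rw [show (Delta R V).comp (DirectSum.lof R ℕ (fun m => TP R V (m+1)) (a+b+1))
        = (Delta R V).comp (io R V (a+b+1)) from rfl] -- io = lof
    rw [hE, LinearMap.comp_assoc,
      show (pr R V (a+b+1)).comp (DirectSum.lof R ℕ (fun m => TP R V (m+1)) (a+b+1))
        = (pr R V (a+b+1)).comp (io R V (a+b+1)) from rfl,
      pr_io_self, LinearMap.comp_id]
  · rw [LinearMap.comp_assoc,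
      show (Delta R V).comp (DirectSum.lof R ℕ (fun m => TP R V (m+1)) n)
        = (Delta R V).comp (io R V n) from rfl,
      prpr_Delta_io_ne R V a b n h, LinearMap.comp_assoc,
      show (pr R V (a+b+1)).comp (DirectSum.lof R ℕ (fun m => TP R V (m+1)) n)
        = (pr R V (a+b+1)).comp (io R V n) from rfl,
      pr_io_ne R V h, LinearMap.comp_zero]

lemma phi_triangular (Φ : TCoalg R V →ₗ[R] TCoalg R V) (hΦ : IsCoalgMor R V Φ) :
    ∀ n m : ℕ, n < m → (pr R V m).comp (Φ.comp (io R V n)) = 0 := by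
  intro n
  induction n using Nat.strong_induction_on with
  | _ n IH =>
    intro m hm
    obtain ⟨E, hE⟩ := exists_E' R V 0 (m - 1) m (by omega)
    have key : E.toLinearMap.comp ((pr R V m).comp (Φ.comp (io R V n))) = 0 := by
      calc E.toLinearMap.comp ((pr R V m).comp (Φ.comp (io R V n)))
          = (E.toLinearMap.comp (pr R V m)).comp (Φ.comp (io R V n)) := by
            rw [LinearMap.comp_assoc]
        _ = ((TensorProduct.map (pr R V 0) (pr R V (m-1))).comp (Delta R V)).comp
              (Φ.comp (io R V n)) := by rw [hE]
        _ = (TensorProduct.map (pr R V 0) (pr R V (m-1))).comp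
              (((Delta R V).comp Φ).comp (io R V n)) := by
            rw [LinearMap.comp_assoc, LinearMap.comp_assoc]
        _ = (TensorProduct.map (pr R V 0) (pr R V (m-1))).comp
              (((TensorProduct.map Φ Φ).comp (Delta R V)).comp (io R V n)) := by rw [hΦ]
        _ = (TensorProduct.map ((pr R V 0).comp Φ) ((pr R V (m-1)).comp Φ)).comp
              ((Delta R V).comp (io R V n)) := by
            simp only [← LinearMap.comp_assoc, TensorProduct.map_comp]
        _ = 0 := by
            rw [prpr_term]
            refine Finset.sum_eq_zero fun i _ => ?_
            have h2 : (pr R V (m-1)).comp (Φ.comp (io R V (n - 1 - ↑i))) = 0 :=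
              IH (n - 1 - ↑i) (by have := i.isLt; omega) (m-1) (by have := i.isLt; omega)
            rw [h2, LinearMap.zero_comp, TensorProduct.map_zero_right, LinearMap.zero_comp]
    refine LinearMap.ext fun x => E.injective ?_
    have := LinearMap.congr_fun key x
    simpa using this

lemma phi_diag0 (Φ : TCoalg R V →ₗ[R] TCoalg R V)
    (h1 : Function.Bijective ((projV R V).comp (Φ.comp (inclV R V)))) :
    Function.Bijective ((pr R V 0).comp (Φ.comp (io R V 0))) := by
  set e := (PiTensorProduct.subsingletonEquiv (0 : Fin 1) : TP R V 1 ≃ₗ[R] V)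
  have heq : (pr R V 0).comp (Φ.comp (io R V 0))
      = (e.symm.toLinearMap.comp ((projV R V).comp (Φ.comp (inclV R V)))).comp e.toLinearMap := by
    refine LinearMap.ext fun x => ?_
    simp [projV, inclV, pr, io, e]
  rw [heq]
  simp only [LinearMap.coe_comp]
  exact (e.symm.bijective.comp h1).comp e.bijective

lemma phi_diag (Φ : TCoalg R V →ₗ[R] TCoalg R V) (hΦ : IsCoalgMor R V Φ)
    (h1 : Function.Bijective ((projV R V).comp (Φ.comp (inclV R V)))) :
    ∀ n : ℕ, Function.Bijective ((pr R V n).comp (Φ.comp (io R V n))) := by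
  intro n
  induction n with
  | zero => exact phi_diag0 R V Φ h1
  | succ b IHb =>
    obtain ⟨E, hE⟩ := exists_E' R V 0 b (b + 1) (by omega)
    have IH' : ∀ j, j = b → Function.Bijective ((pr R V b).comp (Φ.comp (io R V j))) := by
      intro j hj; subst hj; exact IHb
    have key : E.toLinearMap.comp ((pr R V (b+1)).comp (Φ.comp (io R V (b+1))))
        = (TensorProduct.map ((pr R V 0).comp (Φ.comp (io R V (0:ℕ))))
            (((pr R V b).comp (Φ.comp (io R V (b+1-1-(0:ℕ))))).comp
              (pcast R V (by omega)).toLinearMap)).comp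
          ((splitTP R V ((0:ℕ) + 1) (b+1-(0:ℕ))).toLinearMap.comp
            (pcast R V (by omega)).toLinearMap) := by
      calc E.toLinearMap.comp ((pr R V (b+1)).comp (Φ.comp (io R V (b+1))))
          = ((TensorProduct.map (pr R V 0) (pr R V b)).comp (Delta R V)).comp
              (Φ.comp (io R V (b+1))) := by
            rw [← LinearMap.comp_assoc, hE]
        _ = (TensorProduct.map (pr R V 0) (pr R V b)).comp
              (((TensorProduct.map Φ Φ).comp (Delta R V)).comp (io R V (b+1))) := by
            rw [LinearMap.comp_assoc, ← hΦ, LinearMap.comp_assoc]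
        _ = (TensorProduct.map ((pr R V 0).comp Φ) ((pr R V b).comp Φ)).comp
              ((Delta R V).comp (io R V (b+1))) := by
            simp only [← LinearMap.comp_assoc, TensorProduct.map_comp]
        _ = _ := by
            rw [prpr_term, Fintype.sum_eq_single (⟨0, by omega⟩ : Fin (b+1))]
            intro i hi
            have hi0 : (i : ℕ) ≠ 0 := fun h => hi (Fin.ext h)
            have h2 : (pr R V b).comp (Φ.comp (io R V (b + 1 - 1 - ↑i))) = 0 :=
              phi_triangular R V Φ hΦ (b + 1 - 1 - ↑i) b (by have := i.isLt; omega)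
            rw [h2, LinearMap.zero_comp, TensorProduct.map_zero_right, LinearMap.zero_comp]
    have hT : Function.Bijective (⇑E ∘ ⇑((pr R V (b+1)).comp (Φ.comp (io R V (b+1))))) := by
      rw [← LinearEquiv.coe_coe, ← LinearMap.coe_comp, key, LinearMap.coe_comp]
      refine Function.Bijective.comp ?_ ?_
      · refine bij_tmap R (phi_diag0 R V Φ h1) ?_
        rw [LinearMap.coe_comp]
        exact (IH' _ (by omega)).comp (LinearEquiv.bijective _)
      · rw [LinearMap.coe_comp]
        exact (LinearEquiv.bijective _).comp (LinearEquiv.bijective _)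
    exact (Function.Bijective.of_comp_iff' E.bijective _).mp hT

lemma low_stable (Φ : TCoalg R V →ₗ[R] TCoalg R V)
    (htri : ∀ n m : ℕ, n < m → (pr R V m).comp (Φ.comp (io R V n)) = 0)
    (k : ℕ) (z : TCoalg R V) (hz : ∀ m, k ≤ m → pr R V m z = 0) :
    ∀ m, k ≤ m → pr R V m (Φ z) = 0 := by
  classical
  intro m hm
  rw [← DirectSum.sum_support_of z, map_sum, map_sum]
  refine Finset.sum_eq_zero fun j hj => ?_
  have hjk : j < k := by
    by_contra h
    exact (DFinsupp.mem_support_iff.mp hj) (hz j (by omega))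
  have h0 := htri j m (by omega)
  have : DirectSum.of (fun m => TP R V (m+1)) j (z j) = io R V j (z j) := by
    rw [io, DirectSum.lof_eq_of]
  rw [this]
  exact LinearMap.congr_fun h0 (z j)

lemma exists_bound (z : TCoalg R V) : ∃ k : ℕ, ∀ m, k ≤ m → pr R V m z = 0 := by
  classical
  refine ⟨(DFinsupp.support z).sup id + 1, fun m hm => ?_⟩
  by_contra h
  have hmem : m ∈ DFinsupp.support z := DFinsupp.mem_support_iff.mpr h
  have := Finset.le_sup (f := id) hmem
  simp only [id] at this
  omega

lemma phi_inj_aux (Φ : TCoalg R V →ₗ[R] TCoalg R V)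
    (htri : ∀ n m : ℕ, n < m → (pr R V m).comp (Φ.comp (io R V n)) = 0)
    (hdiag : ∀ n : ℕ, Function.Bijective ((pr R V n).comp (Φ.comp (io R V n)))) :
    ∀ k : ℕ, ∀ z : TCoalg R V, (∀ m, k ≤ m → pr R V m z = 0) → Φ z = 0 → z = 0 := by
  intro k
  induction k with
  | zero => exact fun z hz _ => DirectSum.ext_component R fun m => by rw [map_zero]; exact hz m (Nat.zero_le m)
  | succ k IH =>
    intro z hz hphz
    set x := pr R V k z with hx
    set z' := z - io R V k x with hz'def
    have hz' : ∀ m, k ≤ m → pr R V m z' = 0 := by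
      intro m hm
      rcases eq_or_lt_of_le hm with h | h
      · subst h
        rw [hz'def, map_sub, ← hx]
        rw [show pr R V k (io R V k x) = x from LinearMap.congr_fun (pr_io_self R V k) x]
        exact sub_self x
      · rw [hz'def, map_sub, hz m (by omega),
          show pr R V m (io R V k x) = 0 from LinearMap.congr_fun (pr_io_ne R V (by omega)) x,
          sub_zero]
    have hphiz' : Φ z' = -(Φ (io R V k x)) := by
      rw [hz'def, map_sub, hphz, zero_sub]
    have hk0 : pr R V k (Φ (io R V k x)) = 0 := by
      have := low_stable R V Φ htri k z' hz' k le_rfl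
      rw [hphiz', map_neg, neg_eq_zero] at this
      exact this
    have hx0 : x = 0 := by
      refine (hdiag k).injective ?_
      simp only [LinearMap.comp_apply, map_zero]
      exact hk0
    have : z' = z := by rw [hz'def, hx0, map_zero, sub_zero]
    rw [← this] at hz hphz ⊢
    exact IH z' hz' hphz

lemma phi_surj_aux (Φ : TCoalg R V →ₗ[R] TCoalg R V)
    (htri : ∀ n m : ℕ, n < m → (pr R V m).comp (Φ.comp (io R V n)) = 0)
    (hdiag : ∀ n : ℕ, Function.Bijective ((pr R V n).comp (Φ.comp (io R V n)))) :
    ∀ k : ℕ, ∀ z : TCoalg R V, (∀ m, k ≤ m → pr R V m z = 0) → ∃ w, Φ w = z := by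
  intro k
  induction k with
  | zero =>
    intro z hz
    refine ⟨0, ?_⟩
    rw [map_zero]
    exact (DirectSum.ext_component R fun m => by rw [map_zero]; exact hz m (Nat.zero_le m)).symm
  | succ k IH =>
    intro z hz
    obtain ⟨y, hy⟩ := (hdiag k).surjective (pr R V k z)
    set z' := z - Φ (io R V k y) with hz'def
    have hz' : ∀ m, k ≤ m → pr R V m z' = 0 := by
      intro m hm
      rcases eq_or_lt_of_le hm with h | h
      · subst h
        rw [hz'def, map_sub]
        have : pr R V k (Φ (io R V k y)) = pr R V k z := hy
        rw [this, sub_self]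
      · rw [hz'def, map_sub, hz m (by omega),
          show pr R V m (Φ (io R V k y)) = 0 from
            LinearMap.congr_fun (htri k m (by omega)) y, sub_zero]
    obtain ⟨w', hw'⟩ := IH z' hz'
    exact ⟨w' + io R V k y, by rw [map_add, hw', hz'def]; abel⟩

lemma phi_bij (Φ : TCoalg R V →ₗ[R] TCoalg R V)
    (htri : ∀ n m : ℕ, n < m → (pr R V m).comp (Φ.comp (io R V n)) = 0)
    (hdiag : ∀ n : ℕ, Function.Bijective ((pr R V n).comp (Φ.comp (io R V n)))) :
    Function.Bijective Φ := by
  constructor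
  · refine (injective_iff_map_eq_zero Φ).mpr fun z hz => ?_
    obtain ⟨k, hk⟩ := exists_bound R V z
    exact phi_inj_aux R V Φ htri hdiag k z hk hz
  · intro z
    obtain ⟨k, hk⟩ := exists_bound R V z
    exact phi_surj_aux R V Φ htri hdiag k z hk

/-- STATEMENT 19: a coalgebra endomorphism of the reduced tensor coalgebra whose arity-1 term
is an isomorphism is itself a coalgebra isomorphism (it admits a two-sided inverse which is a
coalgebra morphism). -/
theorem stmt19 (Φ : TCoalg R V →ₗ[R] TCoalg R V) (hΦ : IsCoalgMor R V Φ)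
    (h1 : Function.Bijective ((projV R V).comp (Φ.comp (inclV R V)))) :
    ∃ Ψ : TCoalg R V →ₗ[R] TCoalg R V, IsCoalgMor R V Ψ ∧
      Ψ.comp Φ = LinearMap.id ∧ Φ.comp Ψ = LinearMap.id := by
  have htri := phi_triangular R V Φ hΦ
  have hdiag := phi_diag R V Φ hΦ h1
  have hbij := phi_bij R V Φ htri hdiag
  let e := LinearEquiv.ofBijective Φ hbij
  have hgf : e.symm.toLinearMap.comp Φ = LinearMap.id :=
    LinearMap.ext fun x => e.symm_apply_apply x
  have hfg : Φ.comp e.symm.toLinearMap = LinearMap.id :=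
    LinearMap.ext fun x => e.apply_symm_apply x
  set g := e.symm.toLinearMap with hg
  refine ⟨g, ?_, hgf, hfg⟩
  have h2 : (TensorProduct.map g g).comp (TensorProduct.map Φ Φ) = LinearMap.id := by
    rw [← TensorProduct.map_comp, hgf]
    exact TensorProduct.map_id
  show (Delta R V).comp g = (TensorProduct.map g g).comp (Delta R V)
  calc (Delta R V).comp g
      = (((TensorProduct.map g g).comp (TensorProduct.map Φ Φ)).comp (Delta R V)).comp g := by
        rw [h2, LinearMap.id_comp]
    _ = (TensorProduct.map g g).comp (((Delta R V).comp Φ).comp g) := by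
        rw [hΦ]
        simp only [LinearMap.comp_assoc]
    _ = (TensorProduct.map g g).comp (Delta R V) := by
        rw [LinearMap.comp_assoc, hfg, LinearMap.comp_id]
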